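/- ρ is compatible with Kleisli lifting (the key equation making H a monad): for every f : X → H₀M Y and every (d,e) ∈ H₀M X, ρ(f^†(d,e)) = ρ((ρ ∘ f)^†(ρ(d,e))). -/

import Mathlib

open scoped ENNReal NNReal
open Classical

universe u v w

/-- Raw trajectories: a duration in `ℝ≥0∞` and a partial evolution `ℝ≥0 → Option X`. -/
abbrev Traj (X : Type u) := ℝ≥0∞ × (ℝ≥0 → Option X)

/-- The flattening condition: if the duration is finite, the evolution is constant
from the duration onwards.  Membership in `H₀M X` means exactly `Flat`. -/
def Flat {X : Type u} (p : Traj X) : Prop :=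
  ∀ t : ℝ≥0, p.1 ≤ (t : ℝ≥0∞) → p.2 t = p.2 p.1.toNNReal

/-- The unit of `H₀M`. -/
def eta {X : Type u} (x : X) : Traj X := (0, fun _ => some x)

/-- The Kleisli lifting `f^†` of the monad `H₀M`. -/
noncomputable def kl {X : Type u} {Y : Type v} (f : X → Traj Y) (p : Traj X) : Traj Y :=
  if p.1 = ⊤ then (p.1, fun t => (p.2 t).bind fun x' => (f x').2 0)
  else
    match p.2 p.1.toNNReal with
    | none => (p.1, fun t => (p.2 t).bind fun x' => (f x').2 0)
    | some x =>
        (p.1 + (f x).1,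
          fun t =>
            if (t : ℝ≥0∞) < p.1 then (p.2 t).bind fun x' => (f x').2 0
            else (f x).2 (t - p.1.toNNReal))

/-- Membership in `H₊ X ⊆ H₀M X`: the evolution is not everywhere `none`, and it is
defined at every time instant strictly below the duration. -/
def memHp {X : Type u} (p : Traj X) : Prop :=
  p.2 ≠ (fun _ => none) ∧ ∀ t : ℝ≥0, (t : ℝ≥0∞) < p.1 → p.2 t ≠ none

/-- Membership in `H X ⊆ H₀M X`: either the evolution is total, or the duration is `∞`
and the domain of the evolution is downward closed. -/
def memH {X : Type u} (p : Traj X) : Prop :=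
  (∀ t, p.2 t ≠ none) ∨
    (p.1 = ⊤ ∧ ∀ s t : ℝ≥0, s ≤ t → p.2 t ≠ none → p.2 s ≠ none)

/-- The approximation order `⊑` on `H₀M X`. -/
def TrajLE {X : Type u} (p q : Traj X) : Prop :=
  p.1 ≤ q.1 ∧ (∀ t, p.2 t ≠ none → q.2 t = p.2 t) ∧
    (p.1 ≠ ⊤ → p.2 p.1.toNNReal ≠ none → p.1 = q.1)

/-- Join of an ω-chain in `H₀M X`: the duration is the supremum of the durations, and
the evolution at `t` is the common value `(c i).2 t` whenever it is `≠ none` for some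
`i`, and `none` otherwise. -/
noncomputable def chainJoin {X : Type u} (c : ℕ → Traj X) : Traj X :=
  (⨆ i, (c i).1,
    fun t => if h : ∃ i, (c i).2 t ≠ none then (c h.choose).2 t else none)

/-- `d⋆ = sup { s < d ∣ e is defined on [0, s) }`. -/
noncomputable def dstar {X : Type u} (p : Traj X) : ℝ≥0∞ :=
  sSup {s : ℝ≥0∞ | s < p.1 ∧ ∀ t : ℝ≥0, (t : ℝ≥0∞) < s → p.2 t ≠ none}

/-- The retraction `ρ : H₀M X → H₀M X` onto `H X`. -/
noncomputable def rho {X : Type u} (p : Traj X) : Traj X :=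
  ((if ∀ t, p.2 t ≠ none then p.1 else ⊤),
    fun t =>
      if (t : ℝ≥0∞) ≤ dstar p then p.2 t
      else if ∀ t', p.2 t' ≠ none then p.2 (dstar p).toNNReal else none)

/-- The iterates `f⁽ⁿ⁾` of `f : X → H₀M (Y ⊕ X)`. -/
noncomputable def iter {X Y : Type u} (f : X → Traj (Y ⊕ X)) : ℕ → X → Traj Y
  | 0, _ => (0, fun _ => none)
  | n + 1, x => kl (Sum.elim eta (iter f n)) (f x)

/-- The least-fixpoint iteration `f^‡ x = ⊔ₙ f⁽ⁿ⁾ x`. -/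
noncomputable def iterStar {X Y : Type u} (f : X → Traj (Y ⊕ X)) (x : X) : Traj Y :=
  chainJoin fun n => iter f n x

/-- `f : X → H₊ (A ⊕ B)` is progressive in `B` (guarded in the second summand). -/
def Prog {X : Type u} {A B : Type v} (f : X → Traj (A ⊕ B)) : Prop :=
  ∀ x, ∃ a : A, (f x).2 0 = some (Sum.inl a)


section Helpers

variable {X : Type u} {Y : Type v}

private lemma bind_ne_none' {o : Option X} {g : X → Option Y} (h : o.bind g ≠ none) :
    o ≠ none := by
  cases o <;> simp_all

private lemma le_sSup_of_Iio_subset {s : ℝ≥0∞} {S : Set ℝ≥0∞} (h : Set.Iio s ⊆ S) :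
    s ≤ sSup S := by
  refine le_of_forall_lt fun w hw => ?_
  obtain ⟨σ, h1, h2⟩ := exists_between hw
  exact lt_of_lt_of_le h1 (le_sSup (h h2))

private lemma dstar_le_of_none {p : Traj X} {t0 : ℝ≥0} (h : p.2 t0 = none) :
    dstar p ≤ (t0 : ℝ≥0∞) := by
  refine sSup_le fun s hs => ?_
  by_contra hc
  exact hs.2 t0 (lt_of_not_ge hc) h

private lemma dstar_total {p : Traj X} (h : ∀ t, p.2 t ≠ none) : dstar p = p.1 :=
  le_antisymm (sSup_le fun _ hs => hs.1.le)
    (le_sSup_of_Iio_subset fun _ hσ => ⟨hσ, fun t _ => h t⟩)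

private lemma rho_total {p : Traj X} (hp : Flat p) (h : ∀ t, p.2 t ≠ none) : rho p = p := by
  obtain ⟨d, e⟩ := p
  have hds : dstar (d, e) = d := dstar_total h
  unfold rho
  rw [if_pos h, hds]
  simp only [Prod.mk.injEq]
  refine ⟨trivial, funext fun t => ?_⟩
  by_cases h1 : (t : ℝ≥0∞) ≤ d
  · rw [if_pos h1]
  · rw [if_neg h1, if_pos h]
    exact (hp t (le_of_lt (lt_of_not_ge h1))).symm

private lemma rho_nontotal {p : Traj X} (h : ¬ ∀ t, p.2 t ≠ none) :
    rho p = ((⊤, fun t => if (t : ℝ≥0∞) ≤ dstar p then p.2 t else none) : Traj X) := by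
  unfold rho
  rw [if_neg h]
  simp only [Prod.mk.injEq]
  refine ⟨trivial, funext fun t => ?_⟩
  by_cases h1 : (t : ℝ≥0∞) ≤ dstar p
  · rw [if_pos h1, if_pos h1]
  · rw [if_neg h1, if_neg h1, if_neg h]

private lemma rho_zero (q : Traj X) : (rho q).2 0 = q.2 0 := by
  have h : ((0 : ℝ≥0) : ℝ≥0∞) ≤ dstar q := by simp
  simp [rho, h]

private lemma kl_top (f : X → Traj Y) (e : ℝ≥0 → Option X) :
    kl f (⊤, e) = (⊤, fun t => (e t).bind fun x' => (f x').2 0) := by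
  unfold kl
  rw [if_pos rfl]

private lemma kl_none (f : X → Traj Y) {d : ℝ≥0∞} {e : ℝ≥0 → Option X} (hd : d ≠ ⊤)
    (h : e d.toNNReal = none) :
    kl f (d, e) = ((d, fun t => (e t).bind fun x' => (f x').2 0) : Traj Y) := by
  unfold kl
  rw [if_neg hd]
  simp only [h]

private lemma kl_some (f : X → Traj Y) {d : ℝ≥0∞} {e : ℝ≥0 → Option X} {x : X} (hd : d ≠ ⊤)
    (h : e d.toNNReal = some x) :
    kl f (d, e) = ((d + (f x).1,
      fun t => if (t : ℝ≥0∞) < d then (e t).bind (fun x' => (f x').2 0)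
        else (f x).2 (t - d.toNNReal)) : Traj Y) := by
  unfold kl
  rw [if_neg hd]
  simp only [h]

private lemma rho_congr {b1 b2 : ℝ≥0 → Option X} {D1 D2 : ℝ≥0∞}
    (h1 : ¬ ∀ t, b1 t ≠ none) (h2 : ¬ ∀ t, b2 t ≠ none)
    (hd : dstar ((D1, b1) : Traj X) = dstar ((D2, b2) : Traj X))
    (he : ∀ t : ℝ≥0, (t : ℝ≥0∞) ≤ dstar ((D1, b1) : Traj X) → b1 t = b2 t) :
    rho (D1, b1) = rho (D2, b2) := by
  rw [rho_nontotal h1, rho_nontotal h2]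
  simp only [Prod.mk.injEq]
  refine ⟨trivial, funext fun t => ?_⟩
  by_cases ht : (t : ℝ≥0∞) ≤ dstar ((D1, b1) : Traj X)
  · rw [if_pos ht, if_pos (hd ▸ ht)]
    exact he t ht
  · rw [if_neg ht, if_neg (hd ▸ ht)]

end Helpers

section Helpers2

variable {X : Type u} {Y : Type v}

private lemma ite_ne_none' {c : Prop} [Decidable c] {a : Option X}
    (h : (if c then a else none) ≠ none) : c ∧ a ≠ none := by
  by_cases hc : c
  · exact ⟨hc, by rwa [if_pos hc] at h⟩
  · rw [if_neg hc] at h; exact absurd rfl h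

private lemma dstar_le_dur (p : Traj X) : dstar p ≤ p.1 :=
  sSup_le fun _ hs => hs.1.le

end Helpers2

/-- `ρ` is compatible with the Kleisli lifting of `H₀M` (the key equation making `H`
a monad): `ρ ∘ f^† = ρ ∘ (ρ ∘ f)^† ∘ ρ`. -/
theorem rho_kl_compatible {X : Type u} {Y : Type v} (f : X → Traj Y)
    (hf : ∀ x, Flat (f x)) (p : Traj X) (hp : Flat p) :
    rho (kl f p) = rho (kl (fun x => rho (f x)) (rho p)) := by
  obtain ⟨d, e⟩ := p
  by_cases htot : ∀ t, (d, e).2 t ≠ none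
  · rw [rho_total hp htot]
    by_cases hd : d = ⊤
    · subst hd
      rw [kl_top, kl_top]
      simp only [rho_zero]
    · obtain ⟨x, hx⟩ : ∃ x, e d.toNNReal = some x :=
        Option.ne_none_iff_exists'.mp (htot d.toNNReal)
      rw [kl_some f hd hx, kl_some _ hd hx]
      simp only [rho_zero]
      by_cases hfx : ∀ t, (f x).2 t ≠ none
      · rw [rho_total (hf x) hfx]
      · -- case 2b
        obtain ⟨s0, hs0⟩ : ∃ s0 : ℝ≥0, (f x).2 s0 = none := by
          by_contra hcon; push_neg at hcon; exact hfx hcon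
        rw [rho_nontotal hfx]
        set DF := dstar (f x) with hDFdef
        have hdn : (d.toNNReal : ℝ≥0∞) = d := ENNReal.coe_toNNReal hd
        have hsubeq : ∀ t : ℝ≥0, ((t - d.toNNReal : ℝ≥0) : ℝ≥0∞) = (t : ℝ≥0∞) - d := by
          intro t; rw [ENNReal.coe_sub, hdn]
        have hDFs0 : DF ≤ (s0 : ℝ≥0∞) := dstar_le_of_none hs0
        have hDfd : DF ≤ (f x).1 := dstar_le_dur (f x)
        have hcanc : AddLECancellable d := ENNReal.cancel_of_ne hd
        have hgez : ∀ σ : ℝ≥0, ¬ ((d.toNNReal + σ : ℝ≥0) : ℝ≥0∞) < d := by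
          intro σ
          rw [ENNReal.coe_add, hdn]
          exact not_lt.mpr le_self_add
        -- b is the LHS evolution, b2 the RHS one
        have hfactA : ∀ s : ℝ≥0∞, s < d + (f x).1 →
            (∀ t : ℝ≥0, (t : ℝ≥0∞) < s → (if (t : ℝ≥0∞) < d then (e t).bind (fun x' => (f x').2 0)
              else (f x).2 (t - d.toNNReal)) ≠ none) →
            ∀ t : ℝ≥0, (t : ℝ≥0∞) < s → ¬ (t : ℝ≥0∞) < d →
              ((t - d.toNNReal : ℝ≥0) : ℝ≥0∞) ≤ DF := by
          intro s hs1 hs2 t ht hlt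
          rw [hsubeq]
          refine le_sSup ⟨?_, fun σ hσ => ?_⟩
          · rw [ENNReal.sub_lt_iff_lt_right hd (le_of_not_gt hlt)]
            exact lt_of_lt_of_le (ht.trans hs1) (le_of_eq (add_comm d (f x).1))
          · have hστ : (σ : ℝ≥0∞) + d < (t : ℝ≥0∞) := hcanc.lt_tsub_iff_right.mp hσ
            have hττ : ((d.toNNReal + σ : ℝ≥0) : ℝ≥0∞) < s := by
              rw [ENNReal.coe_add, hdn, add_comm]
              exact hστ.trans ht
            have h3 := hs2 (d.toNNReal + σ) hττ
            rw [if_neg (hgez σ), add_tsub_cancel_left] at h3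
            exact h3
        have hfactB : ∀ s : ℝ≥0∞,
            (∀ t : ℝ≥0, (t : ℝ≥0∞) < s → (if (t : ℝ≥0∞) < d then (e t).bind (fun x' => (f x').2 0)
              else if ((t - d.toNNReal : ℝ≥0) : ℝ≥0∞) ≤ DF then (f x).2 (t - d.toNNReal)
                else none) ≠ none) → s ≤ d + DF := by
          intro s h2
          by_contra hcon
          obtain ⟨z, hz1, hz2⟩ := exists_between (lt_of_not_ge hcon)
          have hzt : z ≠ ⊤ := ne_top_of_lt hz2
          have htz : ((z.toNNReal : ℝ≥0) : ℝ≥0∞) = z := ENNReal.coe_toNNReal hzt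
          have h3 := h2 z.toNNReal (by rw [htz]; exact hz2)
          have hnlt : ¬ ((z.toNNReal : ℝ≥0) : ℝ≥0∞) < d := by
            rw [htz]
            exact not_lt.mpr (le_self_add.trans hz1.le)
          rw [if_neg hnlt] at h3
          have h4 := (ite_ne_none' h3).1
          rw [hsubeq, htz] at h4
          exact absurd (hcanc.lt_tsub_iff_left.mpr hz1) (not_lt.mpr h4)
        have hfactC : ∀ s : ℝ≥0∞, s < d + (f x).1 →
            (∀ t : ℝ≥0, (t : ℝ≥0∞) < s → (if (t : ℝ≥0∞) < d then (e t).bind (fun x' => (f x').2 0)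
              else (f x).2 (t - d.toNNReal)) ≠ none) →
            ∀ t : ℝ≥0, (t : ℝ≥0∞) < s →
              (if (t : ℝ≥0∞) < d then (e t).bind (fun x' => (f x').2 0)
                else if ((t - d.toNNReal : ℝ≥0) : ℝ≥0∞) ≤ DF then (f x).2 (t - d.toNNReal)
                  else none) ≠ none := by
          intro s hs1 hs2 t ht
          have h3 := hs2 t ht
          by_cases hlt : (t : ℝ≥0∞) < d
          · rwa [if_pos hlt] at h3 ⊢
          · rw [if_neg hlt] at h3 ⊢
            rw [if_pos (hfactA s hs1 hs2 t ht hlt)]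
            exact h3
        apply rho_congr
        · intro H
          refine H (d.toNNReal + s0) ?_
          rw [if_neg (hgez s0), add_tsub_cancel_left]
          exact hs0
        · intro H
          refine H (d.toNNReal + (s0 + 1)) ?_
          rw [if_neg (hgez (s0 + 1))]
          show (if (((d.toNNReal + (s0 + 1) - d.toNNReal : ℝ≥0)) : ℝ≥0∞) ≤ DF
              then (f x).2 (d.toNNReal + (s0 + 1) - d.toNNReal) else none) = none
          rw [add_tsub_cancel_left]
          exact if_neg (not_le.mpr (lt_of_le_of_lt hDFs0
            (ENNReal.coe_lt_coe.mpr (lt_add_one s0))))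
        · refine le_antisymm (sSup_le fun s hs => ?_)
            (sSup_le fun s hs => le_sSup_of_Iio_subset fun σ hσ => ?_)
          · have hs1 : s < d + (f x).1 := hs.1
            have hs2 : ∀ t : ℝ≥0, (t : ℝ≥0∞) < s →
                (if (t : ℝ≥0∞) < d then (e t).bind (fun x' => (f x').2 0)
                  else (f x).2 (t - d.toNNReal)) ≠ none := hs.2
            refine le_sSup ⟨lt_of_lt_of_le hs1 (add_le_add (le_refl d) le_top),
              fun t ht => hfactC s hs1 hs2 t ht⟩
          · have hs2 : ∀ t : ℝ≥0, (t : ℝ≥0∞) < s →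
                (if (t : ℝ≥0∞) < d then (e t).bind (fun x' => (f x').2 0)
                  else if ((t - d.toNNReal : ℝ≥0) : ℝ≥0∞) ≤ DF then (f x).2 (t - d.toNNReal)
                    else none) ≠ none := hs.2
            have hsb : s ≤ d + DF := hfactB s hs2
            refine ⟨lt_of_lt_of_le hσ (hsb.trans (add_le_add (le_refl d) hDfd)),
              fun t ht => ?_⟩
            have h3 := hs2 t (ht.trans hσ)
            show (if (t : ℝ≥0∞) < d then (e t).bind (fun x' => (f x').2 0)
              else (f x).2 (t - d.toNNReal)) ≠ none
            by_cases hlt : (t : ℝ≥0∞) < d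
            · rwa [if_pos hlt] at h3 ⊢
            · rw [if_neg hlt] at h3 ⊢
              exact (ite_ne_none' h3).2
        · intro t ht
          have hD1 : dstar ((d + (f x).1, fun t =>
              if (t : ℝ≥0∞) < d then (e t).bind (fun x' => (f x').2 0)
                else (f x).2 (t - d.toNNReal)) : Traj Y) ≤ d + DF :=
            sSup_le fun s hs => hfactB s (hfactC s hs.1 hs.2)
          show (if (t : ℝ≥0∞) < d then (e t).bind (fun x' => (f x').2 0)
              else (f x).2 (t - d.toNNReal))
            = (if (t : ℝ≥0∞) < d then (e t).bind (fun x' => (f x').2 0)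
              else if ((t - d.toNNReal : ℝ≥0) : ℝ≥0∞) ≤ DF then (f x).2 (t - d.toNNReal)
                else none)
          by_cases hlt : (t : ℝ≥0∞) < d
          · rw [if_pos hlt, if_pos hlt]
          · rw [if_neg hlt, if_neg hlt, if_pos ?_]
            rw [hsubeq]
            exact tsub_le_iff_left.mpr (ht.trans hD1)
  · -- case 3
    rw [rho_nontotal htot, kl_top]
    simp only [rho_zero]
    obtain ⟨t0, ht0⟩ : ∃ t0 : ℝ≥0, e t0 = none := by
      push_neg at htot; simpa using htot
    by_cases hd : d = ⊤
    · subst hd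
      rw [kl_top]
      set D := dstar (((⊤ : ℝ≥0∞), e) : Traj X) with hD
      have hfact : ∀ s : ℝ≥0∞, s < ⊤ →
          (∀ t : ℝ≥0, (t : ℝ≥0∞) < s → ((e t).bind fun x' => (f x').2 0) ≠ none) → s ≤ D :=
        fun s h1 h2 => le_sSup ⟨h1, fun τ hτ => bind_ne_none' (h2 τ hτ)⟩
      apply rho_congr
      · intro H; exact H t0 (by simp [ht0])
      · intro H
        exact H t0 (by by_cases hc : (t0 : ℝ≥0∞) ≤ D <;> simp [hc, ht0])
      · refine le_antisymm (sSup_le fun s hs => ?_)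
          (sSup_le fun s hs => le_sSup_of_Iio_subset fun σ hσ => ?_)
        · have hs1 : s < ⊤ := hs.1
          have hs2 : ∀ t : ℝ≥0, (t : ℝ≥0∞) < s →
              ((e t).bind fun x' => (f x').2 0) ≠ none := hs.2
          have hsD : s ≤ D := hfact s hs1 hs2
          refine le_sSup ⟨hs1, fun t ht => ?_⟩
          show ((if (t : ℝ≥0∞) ≤ D then e t else none).bind fun a => (f a).2 0) ≠ none
          rw [if_pos (ht.le.trans hsD)]
          exact hs2 t ht
        · have hs2 : ∀ t : ℝ≥0, (t : ℝ≥0∞) < s →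
              ((if (t : ℝ≥0∞) ≤ D then e t else none).bind fun a => (f a).2 0) ≠ none := hs.2
          refine ⟨lt_trans hσ hs.1, fun t ht => ?_⟩
          have h3 := hs2 t (ht.trans hσ)
          show ((e t).bind fun x' => (f x').2 0) ≠ none
          by_cases hc : (t : ℝ≥0∞) ≤ D
          · rwa [if_pos hc] at h3
          · rw [if_neg hc] at h3; simp at h3
      · intro t ht
        have hD1 : dstar (((⊤ : ℝ≥0∞), fun t => (e t).bind fun x' => (f x').2 0) : Traj Y) ≤ D :=
          sSup_le fun s hs => hfact s hs.1 hs.2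
        show ((e t).bind fun x' => (f x').2 0)
            = ((if (t : ℝ≥0∞) ≤ D then e t else none).bind fun a => (f a).2 0)
        rw [if_pos (ht.trans hD1)]
    · cases hcase : e d.toNNReal with
      | none =>
        rw [kl_none f hd hcase]
        set D := dstar ((d, e) : Traj X) with hD
        have hdn : (d.toNNReal : ℝ≥0∞) = d := ENNReal.coe_toNNReal hd
        have hfact : ∀ s : ℝ≥0∞, s < d →
            (∀ t : ℝ≥0, (t : ℝ≥0∞) < s → ((e t).bind fun x' => (f x').2 0) ≠ none) → s ≤ D :=
          fun s h1 h2 => le_sSup ⟨h1, fun τ hτ => bind_ne_none' (h2 τ hτ)⟩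
        apply rho_congr
        · intro H; exact H t0 (by simp [ht0])
        · intro H
          exact H t0 (by by_cases hc : (t0 : ℝ≥0∞) ≤ D <;> simp [hc, ht0])
        · refine le_antisymm (sSup_le fun s hs => ?_)
            (sSup_le fun s hs => le_sSup_of_Iio_subset fun σ hσ => ?_)
          · have hs1 : s < d := hs.1
            have hs2 : ∀ t : ℝ≥0, (t : ℝ≥0∞) < s →
                ((e t).bind fun x' => (f x').2 0) ≠ none := hs.2
            have hsD : s ≤ D := hfact s hs1 hs2
            refine le_sSup ⟨lt_of_lt_of_le hs1 le_top, fun t ht => ?_⟩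
            show ((if (t : ℝ≥0∞) ≤ D then e t else none).bind fun a => (f a).2 0) ≠ none
            rw [if_pos (ht.le.trans hsD)]
            exact hs2 t ht
          · have hs2 : ∀ t : ℝ≥0, (t : ℝ≥0∞) < s →
                ((if (t : ℝ≥0∞) ≤ D then e t else none).bind fun a => (f a).2 0) ≠ none := hs.2
            have hσd : σ < d := by
              by_contra hcon
              have hlt : (d.toNNReal : ℝ≥0∞) < s := by
                rw [hdn]; exact lt_of_le_of_lt (le_of_not_gt hcon) hσ
              have h3 := hs2 d.toNNReal hlt
              have h4 := (ite_ne_none' (bind_ne_none' h3)).2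
              exact h4 hcase
            refine ⟨hσd, fun t ht => ?_⟩
            have h3 := hs2 t (ht.trans hσ)
            show ((e t).bind fun x' => (f x').2 0) ≠ none
            by_cases hc : (t : ℝ≥0∞) ≤ D
            · rwa [if_pos hc] at h3
            · rw [if_neg hc] at h3; simp at h3
        · intro t ht
          have hD1 : dstar ((d, fun t => (e t).bind fun x' => (f x').2 0) : Traj Y) ≤ D :=
            sSup_le fun s hs => hfact s hs.1 hs.2
          show ((e t).bind fun x' => (f x').2 0)
              = ((if (t : ℝ≥0∞) ≤ D then e t else none).bind fun a => (f a).2 0)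
          rw [if_pos (ht.trans hD1)]
      | some x =>
        rw [kl_some f hd hcase]
        set D := dstar ((d, e) : Traj X) with hD
        have ht0d : (t0 : ℝ≥0∞) < d := by
          by_contra hcon
          have h5 : e t0 = e d.toNNReal := hp t0 (le_of_not_gt hcon)
          rw [ht0, hcase] at h5
          cases h5
        have hbt0 : (if (t0 : ℝ≥0∞) < d then (e t0).bind (fun x' => (f x').2 0)
            else (f x).2 (t0 - d.toNNReal)) = none := by
          rw [if_pos ht0d, ht0]; rfl
        have hfact1 : ∀ s : ℝ≥0∞,
            (∀ t : ℝ≥0, (t : ℝ≥0∞) < s → (if (t : ℝ≥0∞) < d then (e t).bind (fun x' => (f x').2 0)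
              else (f x).2 (t - d.toNNReal)) ≠ none) → s ≤ (t0 : ℝ≥0∞) := by
          intro s h2
          by_contra hcon
          exact h2 t0 (lt_of_not_ge hcon) hbt0
        have hfact2 : ∀ s : ℝ≥0∞, s ≤ (t0 : ℝ≥0∞) →
            (∀ t : ℝ≥0, (t : ℝ≥0∞) < s → (if (t : ℝ≥0∞) < d then (e t).bind (fun x' => (f x').2 0)
              else (f x).2 (t - d.toNNReal)) ≠ none) → s ≤ D := by
          intro s hst0 h2
          refine le_sSup ⟨lt_of_le_of_lt hst0 ht0d, fun τ hτ => ?_⟩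
          have h3 := h2 τ hτ
          rw [if_pos ((hτ.trans_le hst0).trans ht0d)] at h3
          exact bind_ne_none' h3
        apply rho_congr
        · intro H; exact H t0 hbt0
        · intro H
          exact H t0 (by by_cases hc : (t0 : ℝ≥0∞) ≤ D <;> simp [hc, ht0])
        · refine le_antisymm (sSup_le fun s hs => ?_)
            (sSup_le fun s hs => le_sSup_of_Iio_subset fun σ hσ => ?_)
          · have hs2 : ∀ t : ℝ≥0, (t : ℝ≥0∞) < s →
                (if (t : ℝ≥0∞) < d then (e t).bind (fun x' => (f x').2 0)
                  else (f x).2 (t - d.toNNReal)) ≠ none := hs.2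
            have hst0 : s ≤ (t0 : ℝ≥0∞) := hfact1 s hs2
            have hsD : s ≤ D := hfact2 s hst0 hs2
            refine le_sSup ⟨lt_of_le_of_lt hst0 ENNReal.coe_lt_top, fun t ht => ?_⟩
            show ((if (t : ℝ≥0∞) ≤ D then e t else none).bind fun a => (f a).2 0) ≠ none
            rw [if_pos (ht.le.trans hsD)]
            have h3 := hs2 t ht
            rwa [if_pos ((ht.trans_le hst0).trans ht0d)] at h3
          · have hs2 : ∀ t : ℝ≥0, (t : ℝ≥0∞) < s →
                ((if (t : ℝ≥0∞) ≤ D then e t else none).bind fun a => (f a).2 0) ≠ none := hs.2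
            have hst0 : s ≤ (t0 : ℝ≥0∞) := by
              by_contra hcon
              exact (ite_ne_none' (bind_ne_none' (hs2 t0 (lt_of_not_ge hcon)))).2 ht0
            refine ⟨lt_of_lt_of_le ((hσ.trans_le hst0).trans ht0d) le_self_add,
              fun t ht => ?_⟩
            have htd : (t : ℝ≥0∞) < d := (((ht.trans hσ).trans_le hst0)).trans ht0d
            show (if (t : ℝ≥0∞) < d then (e t).bind (fun x' => (f x').2 0)
              else (f x).2 (t - d.toNNReal)) ≠ none
            rw [if_pos htd]
            have h3 := hs2 t (ht.trans hσ)
            by_cases hc : (t : ℝ≥0∞) ≤ D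
            · rwa [if_pos hc] at h3
            · rw [if_neg hc] at h3; simp at h3
        · intro t ht
          have hD1t0 : dstar ((d + (f x).1, fun t =>
              if (t : ℝ≥0∞) < d then (e t).bind (fun x' => (f x').2 0)
                else (f x).2 (t - d.toNNReal)) : Traj Y) ≤ (t0 : ℝ≥0∞) :=
            sSup_le fun s hs => hfact1 s hs.2
          have hD1D : dstar ((d + (f x).1, fun t =>
              if (t : ℝ≥0∞) < d then (e t).bind (fun x' => (f x').2 0)
                else (f x).2 (t - d.toNNReal)) : Traj Y) ≤ D :=
            sSup_le fun s hs => hfact2 s (hfact1 s hs.2) hs.2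
          have htd : (t : ℝ≥0∞) < d := lt_of_le_of_lt (ht.trans hD1t0) ht0d
          show (if (t : ℝ≥0∞) < d then (e t).bind (fun x' => (f x').2 0)
              else (f x).2 (t - d.toNNReal))
            = ((if (t : ℝ≥0∞) ≤ D then e t else none).bind fun a => (f a).2 0)
          rw [if_pos htd, if_pos (ht.trans hD1D)]
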